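/- Let θ be a permutation of [0,e−1], and set γ^θ_t := α(θ_t+1, (θ_{t+1}−θ_t) mod e) ∈ ℤI for t ∈ [1,e−1], where ℤI is the affine type A_{e-1}^{(1)} root lattice with null root δ. Then {δ, γ^θ_1, …, γ^θ_{e-1}} is a ℤ-basis of ℤI: every element of ℤI can be written uniquely as kδ + m_1 γ^θ_1 + ⋯ + m_{e-1} γ^θ_{e-1} with k, m_1,…,m_{e-1} ∈ ℤ. -/

import Mathlib

/-- The positive root `α(t,L)` of affine type `A_{e-1}^{(1)}`. -/
def alphaRoot (e : ℕ) (t : ℤ) (L : ℕ) : ZMod e → ℤ := fun j =>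
  (((Finset.range L).filter (fun k : ℕ => ((t + (k : ℤ) : ℤ) : ZMod e) = j)).card : ℤ)

/-- The null root `δ`. -/
def deltaRoot (e : ℕ) : ZMod e → ℤ := fun _ => 1

/-- `γ^θ_t := α(θ_t + 1, (θ_{t+1} − θ_t) mod e)`. -/
def gammaTheta (e : ℕ) (θ : ℕ → ℕ) (t : ℕ) : ZMod e → ℤ :=
  alphaRoot e ((θ t : ℤ) + 1) ((θ (t + 1) + e - θ t) % e)

namespace S11

lemma mod2 {e m : ℕ} (he : 0 < e) (h : m < 2*e) : m % e = if m < e then m else m - e := by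
  split
  · exact Nat.mod_eq_of_lt ‹_›
  · rw [Nat.mod_eq_sub_mod (by omega), Nat.mod_eq_of_lt (by omega)]

lemma alphaRoot_eq {e : ℕ} [NeZero e] (t : ℤ) {L : ℕ} (hL : L ≤ e) (j : ZMod e) :
    alphaRoot e t L j = if (j - (t : ZMod e)).val < L then 1 else 0 := by
  unfold alphaRoot
  set d := (j - (t : ZMod e)).val with hd
  have hde : d < e := ZMod.val_lt _
  have hfil : (Finset.range L).filter (fun k : ℕ => ((t + (k : ℤ) : ℤ) : ZMod e) = j)
      = (Finset.range L).filter (fun k : ℕ => k = d) := by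
    apply Finset.filter_congr
    intro k hk
    rw [Finset.mem_range] at hk
    have hk' : k < e := lt_of_lt_of_le hk hL
    constructor
    · intro h
      have h2 : ((k : ℕ) : ZMod e) = j - t := by
        push_cast at h; linear_combination h
      have hv : ((k : ℕ) : ZMod e).val = d := by rw [h2]
      rwa [ZMod.val_natCast_of_lt hk'] at hv
    · rintro rfl
      have h2 : ((d : ℕ) : ZMod e) = j - t := by
        rw [hd, ZMod.natCast_val, ZMod.cast_id]
      push_cast
      linear_combination h2
  rw [hfil, Finset.filter_eq']
  split <;> rename_i h
  · rw [Finset.mem_range] at h; simp [h]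
  · rw [Finset.mem_range] at h; simp [h]

lemma sub_cast_val {e : ℕ} [NeZero e] {a : ℕ} (ha : a ≤ e) (x : ℕ) :
    ((x : ZMod e) - (a : ZMod e)).val = (x + e - a) % e := by
  have h1 : ((x + e - a : ℕ) : ZMod e) = (x : ZMod e) - a := by
    have h2 : ((x + e - a : ℕ) : ZMod e) + a = ((x : ℕ) : ZMod e) + e := by
      rw [← Nat.cast_add, ← Nat.cast_add]; congr 1; omega
    have he0 : ((e : ℕ) : ZMod e) = 0 := ZMod.natCast_self e
    linear_combination h2 + he0
  rw [← h1, ZMod.val_natCast]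


lemma gamma_eval {e : ℕ} [NeZero e] (he : 0 < e) (θ : ℕ → ℕ) (t : ℕ) (j : ZMod e) :
    gammaTheta e θ t j =
      if (j - ((θ t : ZMod e) + 1)).val < (θ (t + 1) + e - θ t) % e then 1 else 0 := by
  unfold gammaTheta
  rw [alphaRoot_eq _ (le_of_lt (Nat.mod_lt _ he))]
  congr 2
  push_cast
  ring

lemma mem_Icc1e {e t : ℕ} (h1 : 1 ≤ t) (h2 : t ≤ e) : t ∈ Set.Icc 1 e := ⟨h1, h2⟩

lemma gamma_diff {e : ℕ} (he : 1 < e) (θ : ℕ → ℕ)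
    (hθ : Set.BijOn θ (Set.Icc 1 e) (Set.Iio e))
    {r t : ℕ} (hr1 : 1 ≤ r) (hr2 : r ≤ e - 1) (ht1 : 1 ≤ t) (ht2 : t ≤ e - 1) :
    gammaTheta e θ t ((θ r : ZMod e) + 1) - gammaTheta e θ t ((θ r : ZMod e)) =
      (if r = t then 1 else 0) - (if r = t + 1 then 1 else 0) := by
  haveI : NeZero e := ⟨by omega⟩
  have ha : θ t < e := hθ.mapsTo (mem_Icc1e ht1 (by omega))
  have hb : θ (t+1) < e := hθ.mapsTo (mem_Icc1e (by omega) (by omega))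
  have hx : θ r < e := hθ.mapsTo (mem_Icc1e hr1 (by omega))
  have hab : θ t ≠ θ (t+1) := by
    intro h
    have := hθ.injOn (mem_Icc1e ht1 (by omega)) (mem_Icc1e (by omega) (by omega)) h
    omega
  have hxa : (r = t) = (θ r = θ t) := by
    apply propext
    exact ⟨fun h => by rw [h], fun h => hθ.injOn (mem_Icc1e hr1 (by omega)) (mem_Icc1e ht1 (by omega)) h⟩
  have hxb : (r = t + 1) = (θ r = θ (t+1)) := by
    apply propext
    exact ⟨fun h => by rw [h], fun h => hθ.injOn (mem_Icc1e hr1 (by omega)) (mem_Icc1e (by omega) (by omega)) h⟩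
  rw [gamma_eval (by omega) θ, gamma_eval (by omega) θ]
  have h1 : (((θ r : ZMod e) + 1) - ((θ t : ZMod e) + 1)).val = (θ r + e - θ t) % e := by
    have h : ((θ r : ZMod e) + 1) - ((θ t : ZMod e) + 1) = (θ r : ZMod e) - θ t := by ring
    rw [h, sub_cast_val (le_of_lt ha)]
  have h2 : ((θ r : ZMod e) - ((θ t : ZMod e) + 1)).val = (θ r + e - (θ t + 1)) % e := by
    have h : (θ r : ZMod e) - ((θ t : ZMod e) + 1) = (θ r : ZMod e) - ((θ t + 1 : ℕ) : ZMod e) := by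
      push_cast; ring
    rw [h, sub_cast_val (by omega)]
  rw [h1, h2, mod2 (by omega) (by omega), mod2 (by omega) (by omega), mod2 (by omega) (by omega)]
  simp only [hxa, hxb]
  split_ifs <;> omega

lemma gamma_zero {e : ℕ} (he : 1 < e) (θ : ℕ → ℕ)
    (hθ : Set.BijOn θ (Set.Icc 1 e) (Set.Iio e))
    {t : ℕ} (ht1 : 1 ≤ t) (ht2 : t ≤ e - 1) :
    gammaTheta e θ t 0 = if θ (t + 1) < θ t then 1 else 0 := by
  haveI : NeZero e := ⟨by omega⟩
  have ha : θ t < e := hθ.mapsTo (mem_Icc1e ht1 (by omega))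
  have hb : θ (t+1) < e := hθ.mapsTo (mem_Icc1e (by omega) (by omega))
  have hab : θ t ≠ θ (t+1) := by
    intro h
    have := hθ.injOn (mem_Icc1e ht1 (by omega)) (mem_Icc1e (by omega) (by omega)) h
    omega
  rw [gamma_eval (by omega) θ]
  have h0 : ((0 : ZMod e) - ((θ t : ZMod e) + 1)).val = (0 + e - (θ t + 1)) % e := by
    have h : (0 : ZMod e) - ((θ t : ZMod e) + 1) = ((0 : ℕ) : ZMod e) - ((θ t + 1 : ℕ) : ZMod e) := by
      push_cast; ring
    rw [h, sub_cast_val (by omega)]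
  rw [h0, mod2 (by omega) (by omega), mod2 (by omega) (by omega)]
  split_ifs <;> omega


def Phi (e : ℕ) (θ : ℕ → ℕ) : (ℤ × (Fin (e - 1) → ℤ)) →ₗ[ℤ] (ZMod e → ℤ) where
  toFun p := p.1 • deltaRoot e + ∑ t : Fin (e - 1), p.2 t • gammaTheta e θ ((t : ℕ) + 1)
  map_add' p q := by
    funext j
    simp only [Prod.fst_add, Prod.snd_add, Pi.add_apply, Pi.smul_apply, smul_eq_mul,
      Finset.sum_apply, add_mul, Finset.sum_add_distrib]
    ring
  map_smul' c p := by
    funext j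
    simp only [Prod.smul_fst, Prod.smul_snd, Pi.smul_apply, smul_eq_mul, Finset.sum_apply,
      RingHom.id_apply, Pi.add_apply, mul_add, Finset.mul_sum, mul_assoc]

def mcoef (e : ℕ) (θ : ℕ → ℕ) (β : ZMod e → ℤ) (t : ℕ) : ℤ :=
  ∑ r ∈ Finset.Icc 1 t, (β ((θ r : ZMod e) + 1) - β ((θ r : ZMod e)))

def Psi (e : ℕ) (θ : ℕ → ℕ) : (ZMod e → ℤ) →ₗ[ℤ] (ℤ × (Fin (e - 1) → ℤ)) where
  toFun β := (β 0 - ∑ t : Fin (e - 1), mcoef e θ β ((t : ℕ) + 1) *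
      (if θ ((t : ℕ) + 2) < θ ((t : ℕ) + 1) then 1 else 0),
    fun t => mcoef e θ β ((t : ℕ) + 1))
  map_add' β γ := by
    have hm : ∀ t, mcoef e θ (β + γ) t = mcoef e θ β t + mcoef e θ γ t := by
      intro t
      unfold mcoef
      rw [← Finset.sum_add_distrib]
      apply Finset.sum_congr rfl
      intro r _
      simp only [Pi.add_apply]
      ring
    ext
    · simp only [hm, Pi.add_apply, Prod.fst_add, add_mul, Finset.sum_add_distrib]
      ring
    · simp only [Prod.fst_add, Prod.snd_add, Pi.add_apply, hm]
  map_smul' c β := by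
    have hm : ∀ t, mcoef e θ (c • β) t = c * mcoef e θ β t := by
      intro t
      unfold mcoef
      rw [Finset.mul_sum]
      apply Finset.sum_congr rfl
      intro r _
      simp only [Pi.smul_apply, smul_eq_mul]
      ring
    ext
    · simp only [hm, Pi.smul_apply, smul_eq_mul, RingHom.id_apply, Prod.smul_fst, mul_sub,
        Finset.mul_sum, mul_assoc]
    · simp only [RingHom.id_apply, Prod.smul_snd, Pi.smul_apply, smul_eq_mul]
      exact hm _

lemma Psi_Phi {e : ℕ} (he : 1 < e) (θ : ℕ → ℕ)
    (hθ : Set.BijOn θ (Set.Icc 1 e) (Set.Iio e)) (p : ℤ × (Fin (e - 1) → ℤ)) :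
    Psi e θ (Phi e θ p) = p := by
  have hmc : ∀ t : Fin (e - 1), mcoef e θ (Phi e θ p) ((t : ℕ) + 1) = p.2 t := by
    intro t
    have htb : (t : ℕ) < e - 1 := t.2
    unfold mcoef
    have hterm : ∀ r ∈ Finset.Icc 1 ((t : ℕ) + 1),
        (Phi e θ p) ((θ r : ZMod e) + 1) - (Phi e θ p) ((θ r : ZMod e)) =
        ∑ t' : Fin (e - 1), p.2 t' *
          ((if r = (t' : ℕ) + 1 then 1 else 0) - (if r = (t' : ℕ) + 2 then 1 else 0)) := by
      intro r hr
      rw [Finset.mem_Icc] at hr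
      show (p.1 • deltaRoot e + ∑ t' : Fin (e - 1), p.2 t' • gammaTheta e θ ((t' : ℕ) + 1)) _
          - (p.1 • deltaRoot e + ∑ t' : Fin (e - 1), p.2 t' • gammaTheta e θ ((t' : ℕ) + 1)) _ = _
      simp only [Pi.add_apply, Pi.smul_apply, smul_eq_mul, Finset.sum_apply, deltaRoot]
      rw [show ∀ a b c : ℤ, (a * 1 + b) - (a * 1 + c) = b - c from by intros; ring]
      rw [← Finset.sum_sub_distrib]
      apply Finset.sum_congr rfl
      intro t' _
      rw [← mul_sub]
      congr 1
      have := gamma_diff he θ hθ (r := r) (t := (t' : ℕ) + 1) hr.1 (by omega)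
        (by omega) (by omega)
      rw [this]
    rw [Finset.sum_congr rfl hterm, Finset.sum_comm]
    have hinner : ∀ t' : Fin (e - 1),
        ∑ r ∈ Finset.Icc 1 ((t : ℕ) + 1), p.2 t' *
          ((if r = (t' : ℕ) + 1 then 1 else 0) - (if r = (t' : ℕ) + 2 then 1 else 0)) =
        p.2 t' * (if t' = t then 1 else 0) := by
      intro t'
      rw [← Finset.mul_sum]
      congr 1
      rw [Finset.sum_sub_distrib, Finset.sum_ite_eq' (Finset.Icc 1 ((t:ℕ)+1)) ((t':ℕ)+1) (fun _ => (1:ℤ)),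
        Finset.sum_ite_eq' (Finset.Icc 1 ((t:ℕ)+1)) ((t':ℕ)+2) (fun _ => (1:ℤ))]
      simp only [Finset.mem_Icc, Fin.ext_iff]
      split_ifs <;> omega
    rw [Finset.sum_congr rfl (fun t' _ => hinner t')]
    simp only [mul_ite, mul_one, mul_zero]
    rw [Finset.sum_ite_eq' Finset.univ t (fun t' => p.2 t')]
    simp
  have h0 : (Phi e θ p) 0 = p.1 + ∑ t : Fin (e - 1), p.2 t *
      (if θ ((t : ℕ) + 2) < θ ((t : ℕ) + 1) then 1 else 0) := by
    show (p.1 • deltaRoot e + ∑ t' : Fin (e - 1), p.2 t' • gammaTheta e θ ((t' : ℕ) + 1)) 0 = _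
    simp only [Pi.add_apply, Pi.smul_apply, smul_eq_mul, Finset.sum_apply, deltaRoot, mul_one]
    congr 1
    apply Finset.sum_congr rfl
    intro t' _
    congr 1
    have := gamma_zero he θ hθ (t := (t' : ℕ) + 1) (by omega) (by omega)
    rw [this]
  ext
  · show (Phi e θ p) 0 - _ = p.1
    rw [h0]
    have : ∀ t : Fin (e - 1), mcoef e θ (Phi e θ p) ((t : ℕ) + 1) *
        (if θ ((t : ℕ) + 2) < θ ((t : ℕ) + 1) then 1 else 0) =
        p.2 t * (if θ ((t : ℕ) + 2) < θ ((t : ℕ) + 1) then 1 else 0) := by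
      intro t; rw [hmc]
    rw [Finset.sum_congr rfl (fun t _ => this t)]
    ring
  · exact hmc _

end S11

/-- `{δ, γ^θ_1, …, γ^θ_{e-1}}` is a `ℤ`-basis of the root lattice `ℤI`: every element
is uniquely `kδ + m_1 γ^θ_1 + ⋯ + m_{e-1} γ^θ_{e-1}`. -/


theorem statement11 (e : ℕ) (he : 1 < e) (θ : ℕ → ℕ)
    (hθ : Set.BijOn θ (Set.Icc 1 e) (Set.Iio e)) :
    ∀ β : ZMod e → ℤ, ∃! p : ℤ × (Fin (e - 1) → ℤ),
      β = p.1 • deltaRoot e + ∑ t : Fin (e - 1), p.2 t • gammaTheta e θ ((t : ℕ) + 1) := by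
  haveI : NeZero e := ⟨by omega⟩
  have hcard : Fintype.card (Unit ⊕ Fin (e - 1)) = Fintype.card (ZMod e) := by
    simp [ZMod.card]
    omega
  let B : Module.Basis (Unit ⊕ Fin (e - 1)) ℤ (ℤ × (Fin (e - 1) → ℤ)) :=
    (Module.Basis.singleton Unit ℤ).prod (Pi.basisFun ℤ (Fin (e - 1)))
  let E : (ℤ × (Fin (e - 1) → ℤ)) ≃ₗ[ℤ] (ZMod e → ℤ) :=
    B.equiv (Pi.basisFun ℤ (ZMod e)) (Fintype.equivOfCardEq hcard)
  have hsurj : Function.Surjective ((S11.Psi e θ) ∘ₗ E.toLinearMap) := by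
    intro p
    exact ⟨E.symm (S11.Phi e θ p), by simp [S11.Psi_Phi he θ hθ]⟩
  have hinj2 := OrzechProperty.injective_of_surjective_endomorphism _ hsurj
  have hinjPsi : Function.Injective (S11.Psi e θ) := by
    intro x y h
    have h3 : ((S11.Psi e θ) ∘ₗ E.toLinearMap) (E.symm x) = ((S11.Psi e θ) ∘ₗ E.toLinearMap) (E.symm y) := by
      simpa using h
    have h4 := hinj2 h3
    have := congrArg E h4
    simpa using this
  intro β
  refine ⟨S11.Psi e θ β, ?_, ?_⟩
  · have h1 : S11.Psi e θ (S11.Phi e θ (S11.Psi e θ β)) = S11.Psi e θ β := S11.Psi_Phi he θ hθ _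
    have h2 : S11.Phi e θ (S11.Psi e θ β) = β := hinjPsi h1
    exact h2.symm
  · intro q hq
    have h5 : S11.Phi e θ q = β := hq.symm
    rw [← h5, S11.Psi_Phi he θ hθ]
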